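/- For t ∈ ℝ and w ∈ ℂⁿ let g_t·w := (e^{2πi k(i) t} w_i)_i denote the weighted circle action, and let ξ(w) := (2πi·k(i)·w_i)_i be the velocity at t = 0 of the curve t ↦ g_t·w. Then: (i) for all t ∈ ℝ and w, v ∈ ℂⁿ, θ_{g_t·w}(g_t·v) = θ_w(v) and θ̄_{g_t·w}(g_t·v) = θ̄_w(v); (ii) for all w ∈ ℂⁿ, θ_w(ξ(w)) = π·(‖w‖₊² + ‖w‖₋²) and θ̄_w(ξ(w)) = π·(‖w‖₊² − ‖w‖₋²). In particular, on the bi-ellipsoid 𝕊 one has θ(ξ) ≡ 2π and θ̄(ξ) ≡ 0; that is, up to normalization, the restriction Ξ of θ to 𝕊 is a connection form for the weighted circle action, while the restriction Ξ̄ of θ̄ to 𝕊 is invariant and horizontal (basic). -/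

import Mathlib

open Finset

/-- `α⁺_w(v) = Σ_{i : k i > 0} (Re w_i · Im v_i − Im w_i · Re v_i)`. -/
noncomputable def angularPos (n : ℕ) (k : Fin n → ℤ) (w v : Fin n → ℂ) : ℝ :=
  ∑ i ∈ univ.filter (fun i => 0 < k i), ((w i).re * (v i).im - (w i).im * (v i).re)

/-- `α⁻_w(v) = Σ_{i : k i < 0} (Re w_i · Im v_i − Im w_i · Re v_i)`. -/
noncomputable def angularNeg (n : ℕ) (k : Fin n → ℤ) (w v : Fin n → ℂ) : ℝ :=
  ∑ i ∈ univ.filter (fun i => k i < 0), ((w i).re * (v i).im - (w i).im * (v i).re)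

/-- `θ := (α⁺ − α⁻)/2`. -/
noncomputable def thetaForm (n : ℕ) (k : Fin n → ℤ) (w v : Fin n → ℂ) : ℝ :=
  (angularPos n k w v - angularNeg n k w v) / 2

/-- `θ̄ := (α⁺ + α⁻)/2`. -/
noncomputable def thetaBarForm (n : ℕ) (k : Fin n → ℤ) (w v : Fin n → ℂ) : ℝ :=
  (angularPos n k w v + angularNeg n k w v) / 2

/-- `‖w‖₊² := Σ_{i : k i > 0} k(i)·|w_i|²`. -/
noncomputable def normPlusSq (n : ℕ) (k : Fin n → ℤ) (w : Fin n → ℂ) : ℝ :=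
  ∑ i ∈ univ.filter (fun i => 0 < k i), (k i : ℝ) * ‖w i‖ ^ 2

/-- `‖w‖₋² := Σ_{i : k i < 0} (−k(i))·|w_i|²`. -/
noncomputable def normMinusSq (n : ℕ) (k : Fin n → ℤ) (w : Fin n → ℂ) : ℝ :=
  ∑ i ∈ univ.filter (fun i => k i < 0), (-(k i) : ℝ) * ‖w i‖ ^ 2

/-- The weighted circle action `g_t·w := (e^{2πi k(i) t} w_i)_i`. -/
noncomputable def circleAct (n : ℕ) (k : Fin n → ℤ) (t : ℝ) (w : Fin n → ℂ) : Fin n → ℂ :=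
  fun i => Complex.exp ((2 * Real.pi * (k i : ℝ) * t : ℝ) * Complex.I) * w i

/-- The generating vector field `ξ(w)_i := 2π·k(i)·i·w_i`. -/
noncomputable def xiVec (n : ℕ) (k : Fin n → ℤ) (w : Fin n → ℂ) : Fin n → ℂ :=
  fun i => (2 * Real.pi * (k i : ℝ) : ℂ) * Complex.I * w i


lemma summand_inv (x : ℝ) (a b : ℂ) :
    (Complex.exp (x * Complex.I) * a).re * (Complex.exp (x * Complex.I) * b).im -
      (Complex.exp (x * Complex.I) * a).im * (Complex.exp (x * Complex.I) * b).re
    = a.re * b.im - a.im * b.re := by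
  set c := Complex.exp (x * Complex.I) with hc
  have habs : ‖c‖ = 1 := Complex.norm_exp_ofReal_mul_I x
  have h : c.re ^ 2 + c.im ^ 2 = 1 := by
    have h2 := Complex.sq_norm c
    rw [habs] at h2
    rw [Complex.normSq_apply] at h2
    nlinarith [h2]
  simp only [Complex.mul_re, Complex.mul_im]
  linear_combination (a.re * b.im - a.im * b.re) * h

lemma summand_xi (c : ℝ) (a : ℂ) :
    a.re * ((c : ℂ) * Complex.I * a).im - a.im * ((c : ℂ) * Complex.I * a).re
    = c * ‖a‖ ^ 2 := by
  have : ‖a‖ ^ 2 = a.re ^ 2 + a.im ^ 2 := by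
    rw [Complex.sq_norm, Complex.normSq_apply]; ring
  simp only [Complex.mul_re, Complex.mul_im, Complex.I_re, Complex.I_im,
    Complex.ofReal_re, Complex.ofReal_im, this]
  ring

/-- invariance of `θ`, `θ̄` under the weighted circle action and their
values on the generating vector field `ξ`; in particular `θ(ξ) ≡ 2π` and
`θ̄(ξ) ≡ 0` on the bi-ellipsoid `𝕊`. -/
theorem theta_invariance_and_connection
    (n : ℕ) (hn : 1 ≤ n) (k : Fin n → ℤ) (hk : ∀ i, k i ≠ 0)
    (hP : ∃ i, 0 < k i) (hN : ∃ i, k i < 0) :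
    (∀ (t : ℝ) (w v : Fin n → ℂ),
      thetaForm n k (circleAct n k t w) (circleAct n k t v) = thetaForm n k w v ∧
      thetaBarForm n k (circleAct n k t w) (circleAct n k t v) = thetaBarForm n k w v) ∧
    (∀ w : Fin n → ℂ,
      thetaForm n k w (xiVec n k w)
        = Real.pi * (normPlusSq n k w + normMinusSq n k w) ∧
      thetaBarForm n k w (xiVec n k w)
        = Real.pi * (normPlusSq n k w - normMinusSq n k w)) ∧
    (∀ w : Fin n → ℂ, Real.sqrt (normPlusSq n k w) = 1 → Real.sqrt (normMinusSq n k w) = 1 →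
      thetaForm n k w (xiVec n k w) = 2 * Real.pi ∧
      thetaBarForm n k w (xiVec n k w) = 0) := by
  
  constructor
  · intro t w v
    have hpos : angularPos n k (circleAct n k t w) (circleAct n k t v) = angularPos n k w v := by
      unfold angularPos circleAct
      exact Finset.sum_congr rfl (fun i _ => summand_inv _ _ _)
    have hneg : angularNeg n k (circleAct n k t w) (circleAct n k t v) = angularNeg n k w v := by
      unfold angularNeg circleAct
      exact Finset.sum_congr rfl (fun i _ => summand_inv _ _ _)
    constructor <;> simp [thetaForm, thetaBarForm, hpos, hneg]
  have key : ∀ w : Fin n → ℂ,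
      thetaForm n k w (xiVec n k w) = Real.pi * (normPlusSq n k w + normMinusSq n k w) ∧
      thetaBarForm n k w (xiVec n k w) = Real.pi * (normPlusSq n k w - normMinusSq n k w) := by
    intro w
    have hpos : angularPos n k w (xiVec n k w) = 2 * Real.pi * normPlusSq n k w := by
      unfold angularPos xiVec normPlusSq
      rw [Finset.mul_sum]
      refine Finset.sum_congr rfl (fun i _ => ?_)
      have := summand_xi (2 * Real.pi * (k i : ℝ)) (w i)
      rw [show ((2 * Real.pi * (k i : ℝ) : ℝ) : ℂ) = (2 * Real.pi * (k i : ℝ) : ℂ) by push_cast; ring] at this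
      rw [this]; ring
    have hneg : angularNeg n k w (xiVec n k w) = -(2 * Real.pi * normMinusSq n k w) := by
      unfold angularNeg xiVec normMinusSq
      rw [Finset.mul_sum, ← Finset.sum_neg_distrib]
      refine Finset.sum_congr rfl (fun i _ => ?_)
      have := summand_xi (2 * Real.pi * (k i : ℝ)) (w i)
      rw [show ((2 * Real.pi * (k i : ℝ) : ℝ) : ℂ) = (2 * Real.pi * (k i : ℝ) : ℂ) by push_cast; ring] at this
      rw [this]; ring
    constructor <;> (simp [thetaForm, thetaBarForm, hpos, hneg]; ring)
  refine ⟨key, fun w h1 h2 => ?_⟩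
  have hp : normPlusSq n k w = 1 := by
    nlinarith [Real.sq_sqrt (show (0:ℝ) ≤ normPlusSq n k w from
      Finset.sum_nonneg (fun i hi => by
        have : 0 < k i := (Finset.mem_filter.mp hi).2
        positivity)), h1]
  have hm : normMinusSq n k w = 1 := by
    nlinarith [Real.sq_sqrt (show (0:ℝ) ≤ normMinusSq n k w from
      Finset.sum_nonneg (fun i hi => by
        have : k i < 0 := (Finset.mem_filter.mp hi).2
        have : (0:ℝ) ≤ -(k i : ℝ) := by exact_mod_cast neg_nonneg.mpr this.le
        positivity)), h2]
  obtain ⟨e1, e2⟩ := key w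
  rw [e1, e2, hp, hm]
  constructor <;> ring
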